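/- Let f : ℝ^d × ℝ → ℝ^d be differentiable in its first argument, fix real RK coefficients a_{ij}, b_i, c_i (i, j = 1,…,s), times t_0,…,t_N and step sizes h_n = t_{n+1} − t_n. Suppose that for each ε in a neighbourhood of 0 ∈ ℝ there are vectors x_n(ε), X_{n,i}(ε), k_{n,i}(ε) ∈ ℝ^d (n = 0,…,N, i = 1,…,s) satisfying the RK equations x_{n+1}(ε) = x_n(ε) + h_n Σ_{i=1}^s b_i k_{n,i}(ε), k_{n,i}(ε) = f(X_{n,i}(ε), t_n + c_i h_n), X_{n,i}(ε) = x_n(ε) + h_n Σ_{j=1}^s a_{ij} k_{n,j}(ε), and that the maps ε ↦ x_n(ε) and ε ↦ X_{n,i}(ε) are differentiable at ε = 0. Then the maps ε ↦ k_{n,i}(ε) are differentiable at ε = 0 and the derivatives δ_n = (d/dε)x_n(0), Δ_{n,i} = (d/dε)X_{n,i}(0), d_{n,i} = (d/dε)k_{n,i}(0) satisfy the RK discretisation of the variational equations: δ_{n+1} = δ_n + h_n Σ_{i=1}^s b_i d_{n,i}, d_{n,i} = ∂_x f(X_{n,i}(0), t_n + c_i h_n) Δ_{n,i}, and Δ_{n,i}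 = δ_n + h_n Σ_{j=1}^s a_{ij} d_{n,j}, where ∂_x f denotes the derivative (Jacobian) of f with respect to its first argument. -/

import Mathlib

open Matrix BigOperators

/-- Theorem 3.2: RK discretisation commutes with forming variational equations.
If a family of RK solutions depends differentiably on a parameter `ε`, then the
slopes are also differentiable and the derivatives at `ε = 0` satisfy the RK
discretisation of the variational equations. -/
theorem stmt_6 (d s N : ℕ)
    (f : (Fin d → ℝ) → ℝ → (Fin d → ℝ))
    (Df : (Fin d → ℝ) → ℝ → ((Fin d → ℝ) →L[ℝ] (Fin d → ℝ)))
    (hf : ∀ y t, HasFDerivAt (fun z => f z t) (Df y t) y)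
    (a : Fin s → Fin s → ℝ) (b c : Fin s → ℝ)
    (t : Fin (N + 1) → ℝ)
    (x : Fin (N + 1) → ℝ → (Fin d → ℝ))
    (X k : Fin N → Fin s → ℝ → (Fin d → ℝ))
    (U : Set ℝ) (hU : U ∈ nhds (0 : ℝ))
    (hstep : ∀ ε ∈ U, ∀ n : Fin N,
      x n.succ ε = x n.castSucc ε + (t n.succ - t n.castSucc) • ∑ i, b i • k n i ε)
    (hk : ∀ ε ∈ U, ∀ (n : Fin N) (i : Fin s),
      k n i ε = f (X n i ε) (t n.castSucc + c i * (t n.succ - t n.castSucc)))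
    (hX : ∀ ε ∈ U, ∀ (n : Fin N) (i : Fin s),
      X n i ε = x n.castSucc ε + (t n.succ - t n.castSucc) • ∑ j, a i j • k n j ε)
    (δ : Fin (N + 1) → Fin d → ℝ) (Δ : Fin N → Fin s → Fin d → ℝ)
    (hx : ∀ n, HasDerivAt (x n) (δ n) 0)
    (hXder : ∀ (n : Fin N) (i : Fin s), HasDerivAt (X n i) (Δ n i) 0) :
    (∀ (n : Fin N) (i : Fin s), HasDerivAt (k n i)
        (Df (X n i 0) (t n.castSucc + c i * (t n.succ - t n.castSucc)) (Δ n i)) 0) ∧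
    (∀ n : Fin N, δ n.succ = δ n.castSucc + (t n.succ - t n.castSucc) •
        ∑ i, b i • Df (X n i 0) (t n.castSucc + c i * (t n.succ - t n.castSucc)) (Δ n i)) ∧
    (∀ (n : Fin N) (i : Fin s), Δ n i = δ n.castSucc + (t n.succ - t n.castSucc) •
        ∑ j, a i j • Df (X n j 0) (t n.castSucc + c j * (t n.succ - t n.castSucc)) (Δ n j)) := by
  have hkd : ∀ (n : Fin N) (i : Fin s), HasDerivAt (k n i)
      (Df (X n i 0) (t n.castSucc + c i * (t n.succ - t n.castSucc)) (Δ n i)) 0 := by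
    intro n i
    have h1 : HasDerivAt
        (fun ε => f (X n i ε) (t n.castSucc + c i * (t n.succ - t n.castSucc)))
        (Df (X n i 0) (t n.castSucc + c i * (t n.succ - t n.castSucc)) (Δ n i)) 0 :=
      (hf (X n i 0) _).comp_hasDerivAt 0 (hXder n i)
    refine h1.congr_of_eventuallyEq ?_
    filter_upwards [hU] with ε hε
    exact hk ε hε n i
  refine ⟨hkd, ?_, ?_⟩
  · intro n
    have h1 : HasDerivAt
        (fun ε => x n.castSucc ε + (t n.succ - t n.castSucc) • ∑ i, b i • k n i ε)
        (δ n.castSucc + (t n.succ - t n.castSucc) •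
          ∑ i, b i • Df (X n i 0) (t n.castSucc + c i * (t n.succ - t n.castSucc)) (Δ n i)) 0 :=
      (hx n.castSucc).add
        (((HasDerivAt.fun_sum fun i _ => (hkd n i).const_smul (b i)).const_smul
          (t n.succ - t n.castSucc)))
    have h2 : HasDerivAt (x n.succ)
        (δ n.castSucc + (t n.succ - t n.castSucc) •
          ∑ i, b i • Df (X n i 0) (t n.castSucc + c i * (t n.succ - t n.castSucc)) (Δ n i)) 0 := by
      refine h1.congr_of_eventuallyEq ?_
      filter_upwards [hU] with ε hε
      exact hstep ε hε n
    exact (hx n.succ).unique h2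
  · intro n i
    have h1 : HasDerivAt
        (fun ε => x n.castSucc ε + (t n.succ - t n.castSucc) • ∑ j, a i j • k n j ε)
        (δ n.castSucc + (t n.succ - t n.castSucc) •
          ∑ j, a i j • Df (X n j 0) (t n.castSucc + c j * (t n.succ - t n.castSucc)) (Δ n j)) 0 :=
      (hx n.castSucc).add
        (((HasDerivAt.fun_sum fun j _ => (hkd n j).const_smul (a i j)).const_smul
          (t n.succ - t n.castSucc)))
    have h2 : HasDerivAt (X n i)
        (δ n.castSucc + (t n.succ - t n.castSucc) •
          ∑ j, a i j • Df (X n j 0) (t n.castSucc + c j * (t n.succ - t n.castSucc)) (Δ n j)) 0 := by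
      refine h1.congr_of_eventuallyEq ?_
      filter_upwards [hU] with ε hε
      exact hX ε hε n i
    exact (hXder n i).unique h2
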